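/- For any choice of n functions v_1, …, v_n ∈ X there exists a nonzero f ∈ X such that for every choice of coefficients c_1, …, c_n ∈ ℝ one has ‖S f − Σ_{i=1}^n c_i S v_i‖_Y ≥ λ_{n+1} ‖f‖_X; in particular no n-dimensional choice of basis can beat the (n+1)-st singular value in the Kolmogorov n-width sense. -/
import Mathlib


open RealInnerProductSpace

/-- For any choice of `n` functions `v_1, …, v_n ∈ X` there exists a nonzero
`f ∈ X` such that for every choice of coefficients `c_1, …, c_n ∈ ℝ`,
`‖S f − Σ_{i=1}^n c_i S v_i‖ ≥ λ_{n+1} ‖f‖`.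
(Indices shifted: `i = 1, 2, …` corresponds to `0, 1, …`, so `λ_{n+1}` is `lam n`.) -/
theorem no_basis_beats_nwidth
    {X Y : Type*} [NormedAddCommGroup X] [InnerProductSpace ℝ X] [CompleteSpace X]
    [NormedAddCommGroup Y] [InnerProductSpace ℝ Y] [CompleteSpace Y]
    (S : X →L[ℝ] Y) (hS : Function.Injective S)
    (v : HilbertBasis ℕ ℝ X) (u : ℕ → Y) (hu : Orthonormal ℝ u)
    (lam : ℕ → ℝ) (hpos : ∀ i, 0 < lam i) (hanti : StrictAnti lam)
    (hSv : ∀ i, S (v i) = lam i • u i)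
    (hSadj : ∀ i, (ContinuousLinearMap.adjoint S) (u i) = lam i • v i)
    (n : ℕ) (hn : 1 ≤ n) (w : Fin n → X) :
    ∃ f : X, f ≠ 0 ∧ ∀ c : Fin n → ℝ,
      lam n * ‖f‖ ≤ ‖S f - ∑ i : Fin n, c i • S (w i)‖ := by
  classical
  -- linear map sending coefficient vectors to the inner products with S (w j)
  set M : (Fin (n+1) → ℝ) →ₗ[ℝ] (Fin n → ℝ) :=
    { toFun := fun a j => ∑ i : Fin (n+1), a i * ⟪S (v (i : ℕ)), S (w j)⟫
      map_add' := by
        intro a b; funext j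
        simp [add_mul, Finset.sum_add_distrib]
      map_smul' := by
        intro r a
        simp only [RingHom.id_apply]
        funext j
        simp [Finset.mul_sum, mul_assoc] } with hM
  have hker : LinearMap.ker M ≠ ⊥ := by
    intro hbot
    have hinj : Function.Injective M := LinearMap.ker_eq_bot.mp hbot
    have := LinearMap.finrank_le_finrank_of_injective hinj
    simp [Module.finrank_fin_fun] at this
  obtain ⟨a, haM, ha⟩ := (Submodule.ne_bot_iff _).mp hker
  have haM' : ∀ j, ∑ i : Fin (n+1), a i * ⟪S (v (i : ℕ)), S (w j)⟫ = 0 := by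
    intro j
    have := congrFun (LinearMap.mem_ker.mp haM) j
    simpa [hM] using this
  set f : X := ∑ i : Fin (n+1), a i • v (i : ℕ) with hf
  have hov : Orthonormal ℝ fun i : Fin (n+1) => v (i : ℕ) :=
    v.orthonormal.comp _ Fin.val_injective
  have hf0 : f ≠ 0 := by
    intro h0
    exact ha (funext fun i =>
      (Fintype.linearIndependent_iff.mp hov.linearIndependent a (by simpa [hf] using h0)) i)
  refine ⟨f, hf0, fun c => ?_⟩
  -- compute S f
  have hSf : S f = ∑ i : Fin (n+1), (a i * lam (i : ℕ)) • u (i : ℕ) := by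
    simp [hf, map_sum, hSv, smul_smul]
  have hou : Orthonormal ℝ fun i : Fin (n+1) => u (i : ℕ) :=
    hu.comp _ Fin.val_injective
  -- norms
  have hnormf : ‖f‖ ^ 2 = ∑ i : Fin (n+1), a i ^ 2 := by
    rw [← real_inner_self_eq_norm_sq, hf]
    simpa [sq] using hov.inner_sum (fun i => a i) (fun i => a i) Finset.univ
  have hnormSf : ‖S f‖ ^ 2 = ∑ i : Fin (n+1), (a i * lam (i : ℕ)) ^ 2 := by
    rw [← real_inner_self_eq_norm_sq, hSf]
    simpa [sq] using hou.inner_sum (fun i => a i * lam (i:ℕ)) (fun i => a i * lam (i:ℕ)) Finset.univ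
  -- lower bound on ‖S f‖²
  have hlow : lam n ^ 2 * ‖f‖ ^ 2 ≤ ‖S f‖ ^ 2 := by
    rw [hnormf, hnormSf, Finset.mul_sum]
    refine Finset.sum_le_sum fun i _ => ?_
    have hle : lam n ≤ lam (i : ℕ) := hanti.antitone (Nat.lt_succ_iff.mp i.isLt)
    have h1 : lam n ^ 2 ≤ lam (i : ℕ) ^ 2 :=
      pow_le_pow_left₀ (hpos n).le hle 2
    calc lam n ^ 2 * a i ^ 2 ≤ lam (i : ℕ) ^ 2 * a i ^ 2 :=
          mul_le_mul_of_nonneg_right h1 (sq_nonneg _)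
      _ = (a i * lam (i : ℕ)) ^ 2 := by ring
  -- orthogonality
  set g : Y := ∑ j : Fin n, c j • S (w j) with hg
  have horth : ⟪S f, g⟫ = 0 := by
    rw [hg, inner_sum]
    refine Finset.sum_eq_zero fun j _ => ?_
    rw [real_inner_smul_right]
    have : ⟪S f, S (w j)⟫ = ∑ i : Fin (n+1), a i * ⟪S (v (i : ℕ)), S (w j)⟫ := by
      rw [hf, map_sum, sum_inner]
      simp [real_inner_smul_left]
    rw [this, haM' j, mul_zero]
  have hkey : ‖S f‖ ^ 2 ≤ ‖S f - g‖ ^ 2 := by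
    rw [@norm_sub_sq_real, horth]
    nlinarith [sq_nonneg ‖g‖]
  have hsq : (lam n * ‖f‖) ^ 2 ≤ ‖S f - g‖ ^ 2 := by
    calc (lam n * ‖f‖) ^ 2 = lam n ^ 2 * ‖f‖ ^ 2 := by ring
      _ ≤ ‖S f‖ ^ 2 := hlow
      _ ≤ ‖S f - g‖ ^ 2 := hkey
  have h1 : 0 ≤ lam n * ‖f‖ := mul_nonneg (hpos n).le (norm_nonneg _)
  nlinarith [norm_nonneg (S f - g)]
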